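/- Let μ ∈ P₂(ℝ^d) be atomless and m ∈ P₂(ℝ^d), and suppose there exists a Borel map T : ℝ^d → ℝ^d with T_#μ = m and T ∈ L²(ℝ^d; μ). Let φ : P₂(ℝ^d) → ℝ and define the lifts φ_μ^#(ξ) := φ(ξ_#μ) on L²(ℝ^d; μ) and φ_m^#(η) := φ(η_#m) on L²(ℝ^d; m). If φ_μ^# is λ-convex on L²(ℝ^d; μ), then φ_m^# is λ-convex on L²(ℝ^d; m). -/

import Mathlib

open MeasureTheory

theorem lifted_convexity_transfer {d : ℕ}
    (μ m : Measure (EuclideanSpace ℝ (Fin d)))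
    [IsProbabilityMeasure μ] [IsProbabilityMeasure m] [NullSingletonClass μ]
    (lam : ℝ)
    (hμ2 : Integrable (fun x => ‖x‖ ^ 2) μ)
    (hm2 : Integrable (fun x => ‖x‖ ^ 2) m)
    (T : EuclideanSpace ℝ (Fin d) → EuclideanSpace ℝ (Fin d))
    (hTmeas : Measurable T) (hTpush : μ.map T = m)
    (hTL2 : Integrable (fun x => ‖T x‖ ^ 2) μ)
    (φ : Measure (EuclideanSpace ℝ (Fin d)) → ℝ)
    (hconvμ : ∀ ξ₁ ξ₂ : EuclideanSpace ℝ (Fin d) → EuclideanSpace ℝ (Fin d),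
      Measurable ξ₁ → Measurable ξ₂ →
      Integrable (fun x => ‖ξ₁ x‖ ^ 2) μ → Integrable (fun x => ‖ξ₂ x‖ ^ 2) μ →
      ∀ t ∈ Set.Icc (0:ℝ) 1,
        φ (μ.map (fun x => (1 - t) • ξ₁ x + t • ξ₂ x)) ≤
          (1 - t) * φ (μ.map ξ₁) + t * φ (μ.map ξ₂) -
            (lam / 2) * t * (1 - t) * ∫ x, ‖ξ₁ x - ξ₂ x‖ ^ 2 ∂μ) :
    ∀ η₁ η₂ : EuclideanSpace ℝ (Fin d) → EuclideanSpace ℝ (Fin d),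
      Measurable η₁ → Measurable η₂ →
      Integrable (fun x => ‖η₁ x‖ ^ 2) m → Integrable (fun x => ‖η₂ x‖ ^ 2) m →
      ∀ t ∈ Set.Icc (0:ℝ) 1,
        φ (m.map (fun x => (1 - t) • η₁ x + t • η₂ x)) ≤
          (1 - t) * φ (m.map η₁) + t * φ (m.map η₂) -
            (lam / 2) * t * (1 - t) * ∫ x, ‖η₁ x - η₂ x‖ ^ 2 ∂m := by
  intro η₁ η₂ hη₁ hη₂ hI₁ hI₂ t ht
  subst hTpush
  have key := hconvμ (η₁ ∘ T) (η₂ ∘ T) (hη₁.comp hTmeas) (hη₂.comp hTmeas)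
    ((integrable_map_measure (hη₁.norm.pow_const 2).aestronglyMeasurable hTmeas.aemeasurable).mp hI₁)
    ((integrable_map_measure (hη₂.norm.pow_const 2).aestronglyMeasurable hTmeas.aemeasurable).mp hI₂)
    t ht
  have h1 : μ.map (η₁ ∘ T) = (μ.map T).map η₁ :=
    (Measure.map_map hη₁ hTmeas).symm
  have h2 : μ.map (η₂ ∘ T) = (μ.map T).map η₂ :=
    (Measure.map_map hη₂ hTmeas).symm
  have h3 : μ.map (fun x => (1 - t) • (η₁ ∘ T) x + t • (η₂ ∘ T) x)
      = (μ.map T).map (fun x => (1 - t) • η₁ x + t • η₂ x) := by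
    rw [Measure.map_map (by fun_prop : Measurable fun x => (1 - t) • η₁ x + t • η₂ x) hTmeas]
    rfl
  have h4 : ∫ x, ‖(η₁ ∘ T) x - (η₂ ∘ T) x‖ ^ 2 ∂μ
      = ∫ x, ‖η₁ x - η₂ x‖ ^ 2 ∂(μ.map T) := by
    rw [integral_map (f := fun x => ‖η₁ x - η₂ x‖ ^ 2) hTmeas.aemeasurable ((hη₁.sub hη₂).norm.pow_const 2).aestronglyMeasurable]
    rfl
  rw [h1, h2, h3, h4] at key
  exact key
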